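/- Uniform n-boundedness: if f_1,…,f_k : E → F are pointwise distinct and every fiber of every f_i has size at most n, then E admits a valid partition into nk(k−1)+1 parts. -/

import Mathlib

set_option maxHeartbeats 1000000

open Set

lemma biUnion_encard_le' {ι α : Type*} [DecidableEq ι] (n : ℕ) (s : Finset ι) (A : ι → Set α)
    (h : ∀ i, (A i).encard ≤ n) : (⋃ i ∈ s, A i).encard ≤ (s.card : ℕ∞) * n := by
  induction s using Finset.induction with
  | empty => simp
  | insert _ _ hx ih =>
    rename_i a s
    rw [Finset.set_biUnion_insert, Finset.card_insert_of_notMem hx]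
    calc (A a ∪ ⋃ i ∈ s, A i).encard ≤ (A a).encard + (⋃ i ∈ s, A i).encard :=
          Set.encard_union_le _ _
      _ ≤ (n : ℕ∞) + (s.card : ℕ∞) * n := add_le_add (h a) ih
      _ = ((s.card + 1 : ℕ) : ℕ∞) * n := by push_cast; ring

theorem stmt7 {E F : Type*} (k n : ℕ) (f : Fin k → E → F)
    (hpd : ∀ x : E, ∀ p q : Fin k, p ≠ q → f p x ≠ f q x)
    (hbd : ∀ (i : Fin k) (z : F), ({x : E | f i x = z}).encard ≤ n) :
    ∃ c : E → Fin (n * k * (k - 1) + 1),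
      ∀ (i : Fin (n * k * (k - 1) + 1)) (p q : Fin k), p < q →
        ∀ x y : E, c x = i → c y = i → f p x ≠ f q y := by
  classical
  set N := n * k * (k - 1) + 1 with hN
  -- conflict relation
  set B : E → E → Prop := fun x y => ∃ p q : Fin k, p ≠ q ∧ f p x = f q y with hB
  have hBsymm : ∀ x y, B x y → B y x := by
    rintro x y ⟨p, q, hpq, he⟩; exact ⟨q, p, hpq.symm, he.symm⟩
  -- neighborhood bound
  have hnbr : ∀ x : E, ({y | B x y}).encard ≤ (n * k * (k - 1) : ℕ) := by
    intro x
    have hsub : {y | B x y} ⊆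
        ⋃ pq ∈ (Finset.univ : Finset (Fin k)).offDiag,
          {y | f pq.2 y = f pq.1 x} := by
      rintro y ⟨p, q, hpq, he⟩
      refine Set.mem_biUnion (x := (p, q))
        (Finset.mem_offDiag.2 ⟨Finset.mem_univ _, Finset.mem_univ _, hpq⟩) ?_
      exact he.symm
    refine (Set.encard_le_encard hsub).trans ?_
    refine (biUnion_encard_le' n ((Finset.univ : Finset (Fin k)).offDiag)
      (fun pq => {y | f pq.2 y = f pq.1 x}) (fun pq => hbd pq.2 (f pq.1 x))).trans ?_
    have hcard : (Finset.univ : Finset (Fin k)).offDiag.card = k * k - k := by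
      simp [Finset.offDiag_card]
    rw [hcard]
    norm_cast
    have : k * k - k = k * (k - 1) := by
      rw [← Nat.pred_eq_sub_one, Nat.mul_pred]
    rw [this]; ring_nf; exact le_refl _
  -- partial proper colorings
  set S : Set (Set (E × Fin N)) := {s | (∀ a b, a ∈ s → b ∈ s → a.1 = b.1 → a.2 = b.2) ∧
      (∀ a b, a ∈ s → b ∈ s → B a.1 b.1 → a.2 ≠ b.2)} with hS
  obtain ⟨M, hMmax⟩ : ∃ M, Maximal (· ∈ S) M := by
    apply zorn_subset
    intro c hc hchain
    refine ⟨⋃₀ c, ⟨?_, ?_⟩, fun s hs => Set.subset_sUnion_of_mem hs⟩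
    · rintro a b ⟨s, hs, has⟩ ⟨t, ht, hbt⟩ hab
      rcases hchain.total hs ht with h | h
      · exact (hc ht).1 a b (h has) hbt hab
      · exact (hc hs).1 a b has (h hbt) hab
    · rintro a b ⟨s, hs, has⟩ ⟨t, ht, hbt⟩ hab
      rcases hchain.total hs ht with h | h
      · exact (hc ht).2 a b (h has) hbt hab
      · exact (hc hs).2 a b has (h hbt) hab
  have hM : M ∈ S := hMmax.1
  -- M is total
  have htot : ∀ x : E, ∃ i : Fin N, (x, i) ∈ M := by
    intro x
    by_contra hx
    push_neg at hx
    set U : Set (Fin N) := {i | ∃ y, (y, i) ∈ M ∧ B x y} with hU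
    have hUcard : U.encard ≤ (n * k * (k - 1) : ℕ) := by
      have : ∀ i ∈ U, ∃ y, (y, i) ∈ M ∧ B x y := fun i hi => hi
      choose w hw1 hw2 using this
      refine le_trans (Set.encard_le_encard_of_injOn (f := fun i => if h : i ∈ U then w i h else x)
        (t := {y | B x y}) ?_ ?_) (hnbr x)
      · intro i hi; simp only [dif_pos hi]; exact hw2 i hi
      · intro i hi j hj he
        simp only [dif_pos hi, dif_pos hj] at he
        exact hM.1 (w i hi, i) (w j hj, j) (hw1 i hi) (hw1 j hj) he
    have hex : ∃ i : Fin N, i ∉ U := by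
      by_contra h
      push_neg at h
      have : (Set.univ : Set (Fin N)).encard ≤ U.encard :=
        Set.encard_le_encard (fun i _ => h i)
      rw [Set.encard_univ] at this
      have h2 := this.trans hUcard
      rw [ENat.card_eq_coe_fintype_card, Fintype.card_fin] at h2
      exact absurd (Nat.cast_le.mp h2) (by omega)
    obtain ⟨i, hi⟩ := hex
    have hMem : insert (x, i) M ∈ S := by
      constructor
      · rintro a b (rfl | ha) (rfl | hb) hab
        · rfl
        · exact absurd (show (x, b.2) ∈ M by rw [show x = b.1 from hab]; exact hb) (hx b.2)
        · exact absurd (show (x, a.2) ∈ M by rw [show x = a.1 from hab.symm]; exact ha) (hx a.2)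
        · exact hM.1 a b ha hb hab
      · rintro a b (rfl | ha) (rfl | hb) hab
        · intro _
          obtain ⟨p, q, hpq, he⟩ := hab
          exact hpd x p q hpq he
        · intro h
          exact hi ⟨b.1, by rw [show i = b.2 from h]; exact hb, hab⟩
        · intro h
          exact hi ⟨a.1, by rw [show i = a.2 from h.symm]; exact ha, hBsymm _ _ hab⟩
        · exact hM.2 a b ha hb hab
    have hsub := hMmax.2 hMem (Set.subset_insert _ _)
    exact hx i (hsub (Set.mem_insert (x, i) M))
  choose c hc using htot
  refine ⟨c, fun i p q hpq x y hcx hcy he => ?_⟩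
  have : (x, c x).2 ≠ (y, c y).2 :=
    hM.2 (x, c x) (y, c y) (hc x) (hc y) ⟨p, q, hpq.ne, he⟩
  exact this (by rw [hcx, hcy])
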